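/- Let ψ and ψ̃ be two unit vectors in ℂ^d ⊗ ℂ^d with Schmidt decompositions ψ = Σ_{i=1}^d λ_i u_i ⊗ v_i and ψ̃ = Σ_{i=1}^d μ_i ũ_i ⊗ ṽ_i, where {u_i}, {v_i}, {ũ_i}, {ṽ_i} are orthonormal families in ℂ^d, and λ_1 ≥ λ_2 ≥ … ≥ λ_d ≥ 0 and μ_1 ≥ μ_2 ≥ … ≥ μ_d ≥ 0. Then the ℓ²-distance of the coefficient sequences is bounded by the norm distance of the vectors: ‖(λ_i)_i − (μ_i)_i‖₂ ≤ ‖ψ − ψ̃‖. -/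

import Mathlib

open scoped BigOperators Kronecker ComplexOrder
open Matrix

noncomputable section

abbrev Op (n : ℕ) := Matrix (Fin n) (Fin n) ℂ

def inn {I : Type*} [Fintype I] (v w : I → ℂ) : ℂ := ∑ i, star (v i) * w i

def nrm {I : Type*} [Fintype I] (v : I → ℂ) : ℝ := Real.sqrt (inn v v).re

def IsPOVM {n m : ℕ} (A : Fin m → Op n) : Prop :=
  (∀ a, (A a).PosSemidef) ∧ (∑ a, A a) = 1

def IsPVM {n m : ℕ} (A : Fin m → Op n) : Prop :=
  (∀ a, (A a).IsHermitian ∧ A a * A a = A a) ∧ (∑ a, A a) = 1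

structure Game (q m : ℕ) where
  nu : Fin q → Fin q → ℝ
  nu_nonneg : ∀ x y, 0 ≤ nu x y
  nu_sum : (∑ x, ∑ y, nu x y) = 1
  D : Fin m → Fin m → Fin q → Fin q → Bool

structure Strategy (q m nA nB : ℕ) where
  psi : Fin nA × Fin nB → ℂ
  psi_unit : inn psi psi = 1
  A : Fin q → Fin m → Op nA
  B : Fin q → Fin m → Op nB
  A_povm : ∀ x, IsPOVM (A x)
  B_povm : ∀ y, IsPOVM (B y)

def corrRaw {q m nA nB : ℕ} (psi : Fin nA × Fin nB → ℂ)
    (A : Fin q → Fin m → Op nA) (B : Fin q → Fin m → Op nB)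
    (x y : Fin q) (a b : Fin m) : ℂ :=
  inn psi ((A x a ⊗ₖ B y b).mulVec psi)

def Strategy.corr {q m nA nB : ℕ} (S : Strategy q m nA nB) :
    Fin q → Fin q → Fin m → Fin m → ℂ :=
  corrRaw S.psi S.A S.B

def winProbRaw {q m nA nB : ℕ} (G : Game q m) (psi : Fin nA × Fin nB → ℂ)
    (A : Fin q → Fin m → Op nA) (B : Fin q → Fin m → Op nB) : ℝ :=
  ∑ x, ∑ y, G.nu x y *
    ∑ a, ∑ b, (if G.D a b x y then (1:ℝ) else 0) * (corrRaw psi A B x y a b).re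

def winProb {q m nA nB : ℕ} (G : Game q m) (S : Strategy q m nA nB) : ℝ :=
  winProbRaw G S.psi S.A S.B

def qval {q m : ℕ} (G : Game q m) : ℝ :=
  sSup {w : ℝ | ∃ (nA nB : ℕ) (S : Strategy q m nA nB), winProb G S = w}

def margA {q : ℕ} (nu : Fin q → Fin q → ℝ) (x : Fin q) : ℝ := ∑ y, nu x y
def margB {q : ℕ} (nu : Fin q → Fin q → ℝ) (y : Fin q) : ℝ := ∑ x, nu x y

def dsyncRaw {q m nA nB : ℕ} (psi : Fin nA × Fin nB → ℂ)
    (A : Fin q → Fin m → Op nA) (B : Fin q → Fin m → Op nB) (mu : Fin q → ℝ) : ℝ :=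
  1 - ∑ x, mu x * ∑ a, (corrRaw psi A B x x a a).re

def Strategy.dsync {q m nA nB : ℕ} (S : Strategy q m nA nB) (mu : Fin q → ℝ) : ℝ :=
  dsyncRaw S.psi S.A S.B mu

def Game.Symm {q m : ℕ} (G : Game q m) : Prop :=
  (∀ x y, G.nu x y = G.nu y x) ∧ ∀ a b x y, G.D a b x y = G.D b a y x

def Game.Synchronous {q m : ℕ} (G : Game q m) : Prop :=
  G.Symm ∧ (∀ x, 0 < G.nu x x) ∧ ∀ x a b, a ≠ b → G.D a b x x = false

def Game.BetaSync {q m : ℕ} (G : Game q m) (β : ℝ) : Prop :=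
  G.Synchronous ∧ ∀ x, β * ∑ y, G.nu x y ≤ G.nu x x

def Game.Perfect {q m : ℕ} (G : Game q m) : Prop :=
  ∃ (nA nB : ℕ) (S : Strategy q m nA nB), winProb G S = 1

def IsPME {q m n : ℕ} (S : Strategy q m n n) : Prop :=
  (∀ x, IsPVM (S.A x)) ∧
  ∃ U : Op n, Uᴴ * U = 1 ∧
    (∀ p, S.psi p = ((Real.sqrt n)⁻¹ : ℂ) * ∑ i, U p.1 i * U p.2 i) ∧
    (∀ x a, S.B x a = U * (Uᴴ * S.A x a * U)ᵀ * Uᴴ)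

def dilTarget {nA nB kA kB : ℕ} (psi : Fin nA × Fin nB → ℂ)
    (aux : Fin kA × Fin kB → ℂ) :
    (Fin nA × Fin kA) × (Fin nB × Fin kB) → ℂ :=
  fun p => psi (p.1.1, p.2.1) * aux (p.1.2, p.2.2)

def DilIneqs {q m nA nB tA tB kA kB : ℕ}
    (S : Strategy q m nA nB) (T : Strategy q m tA tB)
    (VA : Matrix (Fin tA × Fin kA) (Fin nA) ℂ)
    (VB : Matrix (Fin tB × Fin kB) (Fin nB) ℂ)
    (aux : Fin kA × Fin kB → ℂ) (ε : ℝ) (mu : Fin q → Fin q → ℝ) : Prop :=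
  nrm (fun p => (VA ⊗ₖ VB).mulVec S.psi p - dilTarget T.psi aux p) ≤ ε ∧
  Real.sqrt (∑ x, margA mu x * ∑ a,
    (nrm (fun p => (VA ⊗ₖ VB).mulVec ((S.A x a ⊗ₖ (1 : Op nB)).mulVec S.psi) p
      - dilTarget ((T.A x a ⊗ₖ (1 : Op tB)).mulVec T.psi) aux p)) ^ 2) ≤ ε ∧
  Real.sqrt (∑ y, margB mu y * ∑ b,
    (nrm (fun p => (VA ⊗ₖ VB).mulVec (((1 : Op nA) ⊗ₖ S.B y b).mulVec S.psi) p
      - dilTarget (((1 : Op tA) ⊗ₖ T.B y b).mulVec T.psi) aux p)) ^ 2) ≤ ε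

def LocalDilation {q m nA nB tA tB : ℕ}
    (S : Strategy q m nA nB) (T : Strategy q m tA tB) (ε : ℝ)
    (mu : Fin q → Fin q → ℝ) : Prop :=
  ∃ (kA kB : ℕ) (VA : Matrix (Fin tA × Fin kA) (Fin nA) ℂ)
    (VB : Matrix (Fin tB × Fin kB) (Fin nB) ℂ) (aux : Fin kA × Fin kB → ℂ),
    VAᴴ * VA = 1 ∧ VBᴴ * VB = 1 ∧ inn aux aux = 1 ∧ DilIneqs S T VA VB aux ε mu

def SelfTestsPME {q m tA tB : ℕ} (G : Game q m) (T : Strategy q m tA tB)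
    (κ : ℝ → ℝ) (nuh : Fin q → Fin q → ℝ) : Prop :=
  ∀ ε : ℝ, 0 ≤ ε → ∀ (n : ℕ) (S : Strategy q m n n), IsPME S →
    qval G - ε ≤ winProb G S → LocalDilation S T (κ ε) nuh

def SelfTestsAll {q m tA tB : ℕ} (G : Game q m) (T : Strategy q m tA tB)
    (κ : ℝ → ℝ) (nuh : Fin q → Fin q → ℝ) : Prop :=
  ∀ ε : ℝ, 0 ≤ ε → ∀ (nA nB : ℕ) (S : Strategy q m nA nB),
    qval G - ε ≤ winProb G S → LocalDilation S T (κ ε) nuh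

def SelfTestsClass {q m tA tB : ℕ} (G : Game q m) (T : Strategy q m tA tB)
    (κ : ℝ → ℝ) (nuh : Fin q → Fin q → ℝ)
    (Cl : ∀ nA nB : ℕ, Strategy q m nA nB → Prop) : Prop :=
  ∀ ε : ℝ, 0 ≤ ε → ∀ (nA nB : ℕ) (S : Strategy q m nA nB), Cl nA nB S →
    qval G - ε ≤ winProb G S → LocalDilation S T (κ ε) nuh

def gamePoly {q m nA nB : ℕ} (G : Game q m) (S : Strategy q m nA nB) :
    Matrix (Fin nA × Fin nB) (Fin nA × Fin nB) ℂ :=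
  ∑ x, ∑ y, ∑ a, ∑ b,
    (((G.nu x y : ℝ) : ℂ) * (if G.D a b x y then 1 else 0)) • (S.A x a ⊗ₖ S.B y b)

def specGap {I : Type*} [Fintype I] [DecidableEq I] (M : Matrix I I ℂ) : ℝ :=
  if h : M.IsHermitian then
    (((Finset.univ.val.map h.eigenvalues).sort (· ≤ ·)).getD (Fintype.card I - 1) 0) -
    (((Finset.univ.val.map h.eigenvalues).sort (· ≤ ·)).getD (Fintype.card I - 2) 0)
  else 0

def rhoA {nA nB : ℕ} (psi : Fin nA × Fin nB → ℂ) : Op nA :=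
  Matrix.of fun i j => ∑ k, psi (i, k) * star (psi (j, k))

def rhoB {nA nB : ℕ} (psi : Fin nA × Fin nB → ℂ) : Op nB :=
  Matrix.of fun i j => ∑ k, psi (k, i) * star (psi (k, j))

def IsMaxEntG {I J : Type*} [Fintype I] [DecidableEq I] [Fintype J] (psi : I × J → ℂ) : Prop :=
  Fintype.card I = Fintype.card J ∧
  ∃ (e : I → I → ℂ) (f : I → J → ℂ),
    (∀ i j, inn (e i) (e j) = if i = j then 1 else 0) ∧
    (∀ i j, inn (f i) (f j) = if i = j then 1 else 0) ∧
    ∀ p, psi p = ((Real.sqrt (Fintype.card I))⁻¹ : ℂ) * ∑ i, e i p.1 * f i p.2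

def IsMaxEntIn {kA kB : ℕ} (v : Fin kA × Fin kB → ℂ) : Prop :=
  ∃ (d : ℕ), 0 < d ∧ ∃ (e : Fin d → Fin kA → ℂ) (f : Fin d → Fin kB → ℂ),
    (∀ i j, inn (e i) (e j) = if i = j then 1 else 0) ∧
    (∀ i j, inn (f i) (f j) = if i = j then 1 else 0) ∧
    ∀ p, v p = ((Real.sqrt d)⁻¹ : ℂ) * ∑ i, e i p.1 * f i p.2

def hsNorm {n : ℕ} (M : Op n) : ℝ := Real.sqrt (Mᴴ * M).trace.re

def Matrix.PosSemidef.sqrt {𝕜 : Type*} [RCLike 𝕜] {n : Type*} [Fintype n] [DecidableEq n]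
    {A : Matrix n n 𝕜} (hA : A.PosSemidef) : Matrix n n 𝕜 :=
  hA.1.eigenvectorUnitary.1 * diagonal ((↑) ∘ (Real.sqrt ·) ∘ hA.1.eigenvalues) *
    (star hA.1.eigenvectorUnitary : Matrix n n 𝕜)

def traceNorm {n : ℕ} (M : Op n) : ℝ :=
  ((Matrix.posSemidef_conjTranspose_mul_self M).sqrt).trace.re

lemma st15_tele (d : ℕ) (L : ℕ → ℝ) (hLd : L d = 0) (i : ℕ) (hi : i ≤ d) :
    L i = ∑ k ∈ Finset.range d, (if i ≤ k then L k - L (k+1) else 0) := by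
  have h1 : ∑ k ∈ Finset.range d, (if i ≤ k then L k - L (k+1) else 0)
      = ∑ k ∈ (Finset.range d).filter (fun k => i ≤ k), (L k - L (k+1)) := by
    rw [Finset.sum_filter]
  have h2 : (Finset.range d).filter (fun k => i ≤ k) = Finset.Ico i d := by
    ext k; simp [Finset.mem_filter, Finset.mem_range, Finset.mem_Ico]; omega
  rw [h1, h2, Finset.sum_Ico_eq_sub _ hi, Finset.sum_range_sub' L, Finset.sum_range_sub' L, hLd]
  ring

lemma st15_swap4 {ι κ M : Type*} [AddCommMonoid M] (s : Finset ι) (t : Finset κ)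
    (F : ι → ι → κ → κ → M) :
    ∑ i ∈ s, ∑ j ∈ s, ∑ k ∈ t, ∑ l ∈ t, F i j k l
      = ∑ k ∈ t, ∑ l ∈ t, ∑ i ∈ s, ∑ j ∈ s, F i j k l := by
  have h := Finset.sum_comm (s := s ×ˢ s) (t := t ×ˢ t)
      (f := fun p q => F p.1 p.2 q.1 q.2)
  simpa [Finset.sum_product] using h

lemma st15_stoch (d : ℕ) (L M : ℕ → ℝ) (D : ℕ → ℕ → ℝ)
    (hLa : ∀ n, L (n+1) ≤ L n) (hMa : ∀ n, M (n+1) ≤ M n)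
    (hLd : L d = 0) (hMd : M d = 0)
    (hD0 : ∀ i j, 0 ≤ D i j)
    (hrow : ∀ i, ∑ j ∈ Finset.range d, D i j ≤ 1)
    (hcol : ∀ j, ∑ i ∈ Finset.range d, D i j ≤ 1) :
    ∑ i ∈ Finset.range d, ∑ j ∈ Finset.range d, L i * M j * D i j
      ≤ ∑ i ∈ Finset.range d, L i * M i := by
  set α : ℕ → ℝ := fun k => L k - L (k+1) with hα
  set β : ℕ → ℝ := fun k => M k - M (k+1) with hβ
  have hα0 : ∀ k, 0 ≤ α k := fun k => sub_nonneg.2 (hLa k)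
  have hβ0 : ∀ k, 0 ≤ β k := fun k => sub_nonneg.2 (hMa k)
  have hLe : ∀ i ∈ Finset.range d, L i = ∑ k ∈ Finset.range d, (if i ≤ k then α k else 0) :=
    fun i hi => st15_tele d L hLd i (le_of_lt (Finset.mem_range.1 hi))
  have hMe : ∀ i ∈ Finset.range d, M i = ∑ k ∈ Finset.range d, (if i ≤ k then β k else 0) :=
    fun i hi => st15_tele d M hMd i (le_of_lt (Finset.mem_range.1 hi))
  have key : ∑ i ∈ Finset.range d, ∑ j ∈ Finset.range d, L i * M j * D i j
      = ∑ k ∈ Finset.range d, ∑ l ∈ Finset.range d, α k * β l *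
          (∑ i ∈ Finset.range d, ∑ j ∈ Finset.range d,
            (if i ≤ k ∧ j ≤ l then D i j else 0)) := by
    have e1 : ∑ i ∈ Finset.range d, ∑ j ∈ Finset.range d, L i * M j * D i j
        = ∑ i ∈ Finset.range d, ∑ j ∈ Finset.range d, ∑ k ∈ Finset.range d,
            ∑ l ∈ Finset.range d,
            (if i ≤ k ∧ j ≤ l then α k * β l * D i j else 0) := by
      refine Finset.sum_congr rfl fun i hi => Finset.sum_congr rfl fun j hj => ?_
      rw [hLe i hi, hMe j hj, Finset.sum_mul_sum]
      rw [Finset.sum_mul]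
      refine Finset.sum_congr rfl fun k _ => ?_
      rw [Finset.sum_mul]
      refine Finset.sum_congr rfl fun l _ => ?_
      by_cases h1 : i ≤ k <;> by_cases h2 : j ≤ l <;> simp [h1, h2] <;> ring
    rw [e1, st15_swap4]
    refine Finset.sum_congr rfl fun k _ => Finset.sum_congr rfl fun l _ => ?_
    rw [Finset.mul_sum]
    refine Finset.sum_congr rfl fun i _ => ?_
    rw [Finset.mul_sum]
    refine Finset.sum_congr rfl fun j _ => ?_
    by_cases h1 : i ≤ k ∧ j ≤ l <;> simp [h1] <;> ring
  have key2 : ∑ i ∈ Finset.range d, L i * M i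
      = ∑ k ∈ Finset.range d, ∑ l ∈ Finset.range d, α k * β l *
          (∑ i ∈ Finset.range d, (if i ≤ k ∧ i ≤ l then 1 else 0)) := by
    have e1 : ∑ i ∈ Finset.range d, L i * M i
        = ∑ i ∈ Finset.range d, ∑ k ∈ Finset.range d, ∑ l ∈ Finset.range d,
            (if i ≤ k ∧ i ≤ l then α k * β l else 0) := by
      refine Finset.sum_congr rfl fun i hi => ?_
      rw [hLe i hi, hMe i hi, Finset.sum_mul_sum]
      refine Finset.sum_congr rfl fun k _ => Finset.sum_congr rfl fun l _ => ?_
      by_cases h1 : i ≤ k <;> by_cases h2 : i ≤ l <;> simp [h1, h2]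
    rw [e1, Finset.sum_comm]
    refine Finset.sum_congr rfl fun k _ => ?_
    rw [Finset.sum_comm]
    refine Finset.sum_congr rfl fun l _ => ?_
    rw [Finset.mul_sum]
    refine Finset.sum_congr rfl fun i _ => ?_
    by_cases h1 : i ≤ k ∧ i ≤ l <;> simp [h1]
  rw [key, key2]
  refine Finset.sum_le_sum fun k hk => Finset.sum_le_sum fun l hl => ?_
  refine mul_le_mul_of_nonneg_left ?_ (mul_nonneg (hα0 k) (hβ0 l))
  have hkd : k < d := Finset.mem_range.1 hk
  have hld : l < d := Finset.mem_range.1 hl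
  have hT1 : ∑ i ∈ Finset.range d, ∑ j ∈ Finset.range d,
      (if i ≤ k ∧ j ≤ l then D i j else 0) ≤ (min k l : ℝ) + 1 := by
    rcases le_total k l with hkl | hkl
    · have : ∀ i ∈ Finset.range d, ∑ j ∈ Finset.range d,
          (if i ≤ k ∧ j ≤ l then D i j else 0) ≤ (if i ≤ k then 1 else 0) := by
        intro i _
        by_cases h1 : i ≤ k
        · simp only [h1, true_and, if_true]
          calc ∑ j ∈ Finset.range d, (if j ≤ l then D i j else 0)
              ≤ ∑ j ∈ Finset.range d, D i j := by
                refine Finset.sum_le_sum fun j _ => ?_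
                by_cases h2 : j ≤ l <;> simp [h2, hD0]
            _ ≤ 1 := hrow i
        · simp [h1]
      calc ∑ i ∈ Finset.range d, ∑ j ∈ Finset.range d,
            (if i ≤ k ∧ j ≤ l then D i j else 0)
          ≤ ∑ i ∈ Finset.range d, (if i ≤ k then (1:ℝ) else 0) :=
            Finset.sum_le_sum this
        _ = (k : ℝ) + 1 := by
            rw [← Finset.sum_filter]
            have hf : (Finset.range d).filter (fun i => i ≤ k) = Finset.range (k+1) := by
              ext x; simp [Finset.mem_filter, Finset.mem_range]; omega
            rw [hf, Finset.sum_const, Finset.card_range, nsmul_eq_mul]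
            push_cast; ring
        _ = (min k l : ℝ) + 1 := by
            rw [min_eq_left (by exact_mod_cast hkl : (k:ℝ) ≤ (l:ℝ))]
    · have hswap : ∑ i ∈ Finset.range d, ∑ j ∈ Finset.range d,
          (if i ≤ k ∧ j ≤ l then D i j else 0)
          = ∑ j ∈ Finset.range d, ∑ i ∈ Finset.range d,
          (if i ≤ k ∧ j ≤ l then D i j else 0) := Finset.sum_comm
      rw [hswap]
      have : ∀ j ∈ Finset.range d, ∑ i ∈ Finset.range d,
          (if i ≤ k ∧ j ≤ l then D i j else 0) ≤ (if j ≤ l then 1 else 0) := by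
        intro j _
        by_cases h2 : j ≤ l
        · simp only [h2, and_true, if_true]
          calc ∑ i ∈ Finset.range d, (if i ≤ k then D i j else 0)
              ≤ ∑ i ∈ Finset.range d, D i j := by
                refine Finset.sum_le_sum fun i _ => ?_
                by_cases h1 : i ≤ k <;> simp [h1, hD0]
            _ ≤ 1 := hcol j
        · simp [h2]
      calc ∑ j ∈ Finset.range d, ∑ i ∈ Finset.range d,
            (if i ≤ k ∧ j ≤ l then D i j else 0)
          ≤ ∑ j ∈ Finset.range d, (if j ≤ l then (1:ℝ) else 0) :=
            Finset.sum_le_sum this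
        _ = (l : ℝ) + 1 := by
            rw [← Finset.sum_filter]
            have hf : (Finset.range d).filter (fun j => j ≤ l) = Finset.range (l+1) := by
              ext x; simp [Finset.mem_filter, Finset.mem_range]; omega
            rw [hf, Finset.sum_const, Finset.card_range, nsmul_eq_mul]
            push_cast; ring
        _ = (min k l : ℝ) + 1 := by
            rw [min_eq_right (by exact_mod_cast hkl : (l:ℝ) ≤ (k:ℝ))]
  have hT2 : ∑ i ∈ Finset.range d, (if i ≤ k ∧ i ≤ l then (1:ℝ) else 0)
      = (min k l : ℝ) + 1 := by
    rw [← Finset.sum_filter]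
    have hf : (Finset.range d).filter (fun i => i ≤ k ∧ i ≤ l)
        = Finset.range (min k l + 1) := by
      ext x; simp [Finset.mem_filter, Finset.mem_range]; omega
    rw [hf, Finset.sum_const, Finset.card_range, nsmul_eq_mul]
    push_cast; ring
  rw [hT2]; exact hT1

lemma st15_inn_star {I : Type*} [Fintype I] (v w : I → ℂ) : star (inn v w) = inn w v := by
  simp only [inn, star_sum, star_mul', star_star]
  exact Finset.sum_congr rfl fun i _ => mul_comm _ _

lemma st15_complete {d : ℕ} (w : Fin d → Fin d → ℂ)
    (hw : ∀ i j, inn (w i) (w j) = if i = j then 1 else 0) (p q : Fin d) :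
    ∑ i, star (w i p) * w i q = if p = q then 1 else 0 := by
  let Mw : Matrix (Fin d) (Fin d) ℂ := Matrix.of fun i r => w i r
  have h1 : Mw * Mwᴴ = 1 := by
    ext i j
    have hji := hw j i
    simp only [inn] at hji
    simp only [Matrix.mul_apply, Matrix.conjTranspose_apply, Matrix.of_apply,
      Matrix.one_apply, Mw]
    calc ∑ r, w i r * star (w j r) = ∑ r, star (w j r) * w i r :=
          Finset.sum_congr rfl fun r _ => mul_comm _ _
      _ = if j = i then 1 else 0 := hji
      _ = if i = j then 1 else 0 := by simp [eq_comm]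
  have h2 : Mwᴴ * Mw = 1 := mul_eq_one_comm.mp h1
  have h3 := congrFun (congrFun h2 p) q
  simpa [Matrix.mul_apply, Matrix.conjTranspose_apply, Matrix.of_apply, Matrix.one_apply,
    Mw] using h3

lemma st15_expand {d : ℕ} (lam mu : Fin d → ℝ)
    (u v ut vt : Fin d → Fin d → ℂ) (psi psit : Fin d × Fin d → ℂ)
    (hdec : ∀ p, psi p = ∑ i, (lam i : ℂ) * u i p.1 * v i p.2)
    (hdect : ∀ p, psit p = ∑ i, (mu i : ℂ) * ut i p.1 * vt i p.2) :
    inn psi psit = ∑ i, ∑ j,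
      (lam i : ℂ) * (mu j : ℂ) * inn (u i) (ut j) * inn (v i) (vt j) := by
  have e1 : inn psi psit = ∑ p1 : Fin d, ∑ p2 : Fin d, ∑ i : Fin d, ∑ j : Fin d,
      star ((lam i : ℂ) * u i p1 * v i p2) * ((mu j : ℂ) * ut j p1 * vt j p2) := by
    simp only [inn]
    rw [Fintype.sum_prod_type]
    refine Finset.sum_congr rfl fun p1 _ => Finset.sum_congr rfl fun p2 _ => ?_
    rw [hdec, hdect, star_sum, Finset.sum_mul_sum]
  rw [e1, st15_swap4]
  refine Finset.sum_congr rfl fun i _ => Finset.sum_congr rfl fun j _ => ?_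
  have inner1 : ∀ p1 : Fin d,
      ∑ p2 : Fin d, star ((lam i : ℂ) * u i p1 * v i p2) * ((mu j : ℂ) * ut j p1 * vt j p2)
        = (star (u i p1) * ut j p1) *
            ((lam i : ℂ) * (mu j : ℂ) * ∑ p2 : Fin d, star (v i p2) * vt j p2) := by
    intro p1
    rw [Finset.mul_sum, Finset.mul_sum]
    refine Finset.sum_congr rfl fun p2 _ => ?_
    simp only [star_mul', Complex.star_def, Complex.conj_ofReal]
    ring
  rw [Finset.sum_congr rfl fun p1 _ => inner1 p1, ← Finset.sum_mul]
  simp only [inn]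
  ring

lemma st15_bessel {d : ℕ} (x : Fin d → ℂ) (hx : inn x x = 1)
    (w : Fin d → Fin d → ℂ)
    (hw : ∀ i j, inn (w i) (w j) = if i = j then 1 else 0) :
    ∑ j, Complex.normSq (inn x (w j)) = 1 := by
  have hcomp := st15_complete w hw
  have key : ∑ j, inn x (w j) * star (inn x (w j)) = 1 := by
    have e1 : ∀ j, inn x (w j) * star (inn x (w j))
        = ∑ p : Fin d, ∑ q : Fin d, (star (x p) * x q) * (w j p * star (w j q)) := by
      intro j
      simp only [inn, star_sum, star_mul', star_star]
      rw [Finset.sum_mul_sum]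
      refine Finset.sum_congr rfl fun p _ => Finset.sum_congr rfl fun q _ => ?_
      ring
    rw [Finset.sum_congr rfl fun j _ => e1 j]
    rw [Finset.sum_comm]
    have e2 : ∀ p : Fin d, ∑ j : Fin d, ∑ q : Fin d,
        (star (x p) * x q) * (w j p * star (w j q))
        = ∑ q : Fin d, ∑ j : Fin d, (star (x p) * x q) * (w j p * star (w j q)) :=
      fun p => Finset.sum_comm
    rw [Finset.sum_congr rfl fun p _ => e2 p]
    have e3 : ∀ p q : Fin d, ∑ j : Fin d, w j p * star (w j q)
        = if p = q then 1 else 0 := by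
      intro p q
      have h := congrArg star (hcomp p q)
      simp only [star_sum, star_mul', star_star] at h
      rw [h]
      by_cases h2 : p = q <;> simp [h2]
    have e4 : ∀ p : Fin d, ∑ q : Fin d, ∑ j : Fin d,
        (star (x p) * x q) * (w j p * star (w j q)) = star (x p) * x p := by
      intro p
      have : ∀ q : Fin d, ∑ j : Fin d, (star (x p) * x q) * (w j p * star (w j q))
          = (star (x p) * x q) * (if p = q then 1 else 0) := by
        intro q
        rw [← Finset.mul_sum, e3]
      rw [Finset.sum_congr rfl fun q _ => this q]
      simp [mul_ite]
    rw [Finset.sum_congr rfl fun p _ => e4 p]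
    simpa [inn] using hx
  have : ∀ j, inn x (w j) * star (inn x (w j)) = (Complex.normSq (inn x (w j)) : ℂ) := by
    intro j
    rw [Complex.star_def, Complex.mul_conj]
  rw [Finset.sum_congr rfl fun j _ => this j] at key
  exact_mod_cast key

/-- the ℓ²-distance of ordered Schmidt coefficient sequences is
bounded by the norm distance of the vectors. -/
theorem stmt15 {d : ℕ} (psi psit : Fin d × Fin d → ℂ)
    (hpsi : inn psi psi = 1) (hpsit : inn psit psit = 1)
    (lam mu : Fin d → ℝ)
    (u v ut vt : Fin d → Fin d → ℂ)
    (hu : ∀ i j, inn (u i) (u j) = if i = j then 1 else 0)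
    (hv : ∀ i j, inn (v i) (v j) = if i = j then 1 else 0)
    (hut : ∀ i j, inn (ut i) (ut j) = if i = j then 1 else 0)
    (hvt : ∀ i j, inn (vt i) (vt j) = if i = j then 1 else 0)
    (hlam_nn : ∀ i, 0 ≤ lam i) (hmu_nn : ∀ i, 0 ≤ mu i)
    (hlam_anti : ∀ i j : Fin d, i ≤ j → lam j ≤ lam i)
    (hmu_anti : ∀ i j : Fin d, i ≤ j → mu j ≤ mu i)
    (hdec : ∀ p, psi p = ∑ i, (lam i : ℂ) * u i p.1 * v i p.2)
    (hdect : ∀ p, psit p = ∑ i, (mu i : ℂ) * ut i p.1 * vt i p.2) :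
    Real.sqrt (∑ i, (lam i - mu i) ^ 2) ≤ nrm (fun p => psi p - psit p) := by
  classical
  set a : Fin d → Fin d → ℂ := fun i j => inn (u i) (ut j) with ha
  set b : Fin d → Fin d → ℂ := fun i j => inn (v i) (vt j) with hb
  -- coefficient norms
  have hltwo : ∑ i, lam i ^ 2 = 1 := by
    have h := st15_expand lam lam u v u v psi psi hdec hdec
    rw [hpsi] at h
    simp only [hu, hv, mul_ite, mul_one, mul_zero, ite_mul, zero_mul,
      Finset.sum_ite_eq, Finset.mem_univ, if_true] at h
    have h2 : ((∑ i, lam i ^ 2 : ℝ) : ℂ) = 1 := by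
      push_cast
      rw [h]
      exact Finset.sum_congr rfl fun i _ => by ring
    exact_mod_cast h2
  have hmtwo : ∑ i, mu i ^ 2 = 1 := by
    have h := st15_expand mu mu ut vt ut vt psit psit hdect hdect
    rw [hpsit] at h
    simp only [hut, hvt, mul_ite, mul_one, mul_zero, ite_mul, zero_mul,
      Finset.sum_ite_eq, Finset.mem_univ, if_true] at h
    have h2 : ((∑ i, mu i ^ 2 : ℝ) : ℂ) = 1 := by
      push_cast
      rw [h]
      exact Finset.sum_congr rfl fun i _ => by ring
    exact_mod_cast h2
  -- overlap expansion
  have hov : inn psi psit = ∑ i, ∑ j, (lam i : ℂ) * (mu j : ℂ) * a i j * b i j :=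
    st15_expand lam mu u v ut vt psi psit hdec hdect
  -- the doubly stochastic matrix
  set DD : Fin d → Fin d → ℝ :=
    fun i j => (Complex.normSq (a i j) + Complex.normSq (b i j)) / 2 with hDD
  have hDD0 : ∀ i j, 0 ≤ DD i j := by
    intro i j
    have := Complex.normSq_nonneg (a i j)
    have := Complex.normSq_nonneg (b i j)
    simp only [hDD]
    positivity
  have hrowA : ∀ i, ∑ j, Complex.normSq (a i j) = 1 := fun i =>
    st15_bessel (u i) (by simpa using hu i i) ut hut
  have hrowB : ∀ i, ∑ j, Complex.normSq (b i j) = 1 := fun i =>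
    st15_bessel (v i) (by simpa using hv i i) vt hvt
  have hcolA : ∀ j, ∑ i, Complex.normSq (a i j) = 1 := by
    intro j
    have h := st15_bessel (ut j) (by simpa using hut j j) u hu
    calc ∑ i, Complex.normSq (a i j)
        = ∑ i, Complex.normSq (inn (ut j) (u i)) := by
          refine Finset.sum_congr rfl fun i _ => ?_
          simp only [ha]
          rw [← st15_inn_star (ut j) (u i)]
          simp [Complex.star_def, Complex.normSq_conj]
      _ = 1 := h
  have hcolB : ∀ j, ∑ i, Complex.normSq (b i j) = 1 := by
    intro j
    have h := st15_bessel (vt j) (by simpa using hvt j j) v hv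
    calc ∑ i, Complex.normSq (b i j)
        = ∑ i, Complex.normSq (inn (vt j) (v i)) := by
          refine Finset.sum_congr rfl fun i _ => ?_
          simp only [hb]
          rw [← st15_inn_star (vt j) (v i)]
          simp [Complex.star_def, Complex.normSq_conj]
      _ = 1 := h
  have hDDrow : ∀ i, ∑ j, DD i j = 1 := by
    intro i
    simp only [hDD]
    rw [← Finset.sum_div, Finset.sum_add_distrib, hrowA i, hrowB i]
    norm_num
  have hDDcol : ∀ j, ∑ i, DD i j = 1 := by
    intro j
    simp only [hDD]
    rw [← Finset.sum_div, Finset.sum_add_distrib, hcolA j, hcolB j]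
    norm_num
  -- real part bound
  have habs : (inn psi psit).re ≤ ∑ i, ∑ j, lam i * mu j * DD i j := by
    rw [hov, Complex.re_sum]
    refine Finset.sum_le_sum fun i _ => ?_
    rw [Complex.re_sum]
    refine Finset.sum_le_sum fun j _ => ?_
    have e : (lam i : ℂ) * (mu j : ℂ) * a i j * b i j
        = ((lam i * mu j : ℝ) : ℂ) * (a i j * b i j) := by push_cast; ring
    rw [e, Complex.re_ofReal_mul]
    refine mul_le_mul_of_nonneg_left ?_ (mul_nonneg (hlam_nn i) (hmu_nn j))
    calc (a i j * b i j).re ≤ ‖a i j * b i j‖ := Complex.re_le_norm _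
      _ = ‖a i j‖ * ‖b i j‖ := norm_mul _ _
      _ ≤ DD i j := by
          have h1 := Complex.sq_norm (a i j)
          have h2 := Complex.sq_norm (b i j)
          have h3 := sq_nonneg (‖a i j‖ - ‖b i j‖)
          simp only [hDD]
          nlinarith
  -- transfer to ℕ-indexed functions and apply the rearrangement bound
  set L : ℕ → ℝ := fun n => if h : n < d then lam ⟨n, h⟩ else 0 with hL
  set M : ℕ → ℝ := fun n => if h : n < d then mu ⟨n, h⟩ else 0 with hM
  set D' : ℕ → ℕ → ℝ := fun m n =>
    if h : m < d ∧ n < d then DD ⟨m, h.1⟩ ⟨n, h.2⟩ else 0 with hD'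
  have hLa : ∀ n, L (n+1) ≤ L n := by
    intro n
    by_cases h1 : n + 1 < d
    · have h0 : n < d := Nat.lt_of_succ_lt h1
      simp only [hL, dif_pos h1, dif_pos h0]
      exact hlam_anti ⟨n, h0⟩ ⟨n+1, h1⟩ (by simp [Fin.le_def])
    · by_cases h0 : n < d
      · simp only [hL, dif_neg h1, dif_pos h0]
        exact hlam_nn _
      · simp only [hL, dif_neg h1, dif_neg h0]
        exact le_refl 0
  have hMa : ∀ n, M (n+1) ≤ M n := by
    intro n
    by_cases h1 : n + 1 < d
    · have h0 : n < d := Nat.lt_of_succ_lt h1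
      simp only [hM, dif_pos h1, dif_pos h0]
      exact hmu_anti ⟨n, h0⟩ ⟨n+1, h1⟩ (by simp [Fin.le_def])
    · by_cases h0 : n < d
      · simp only [hM, dif_neg h1, dif_pos h0]
        exact hmu_nn _
      · simp only [hM, dif_neg h1, dif_neg h0]
        exact le_refl 0
  have hLd : L d = 0 := dif_neg (lt_irrefl d)
  have hMd : M d = 0 := dif_neg (lt_irrefl d)
  have hD'0 : ∀ i j, 0 ≤ D' i j := by
    intro i j
    by_cases h : i < d ∧ j < d
    · simp only [hD', dif_pos h]; exact hDD0 _ _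
    · simp only [hD', dif_neg h]
      exact le_refl 0
  have hD'row : ∀ i, ∑ j ∈ Finset.range d, D' i j ≤ 1 := by
    intro i
    by_cases h : i < d
    · have : ∑ j ∈ Finset.range d, D' i j = ∑ j : Fin d, DD ⟨i, h⟩ j := by
        rw [← Fin.sum_univ_eq_sum_range (fun n => D' i n) d]
        refine Finset.sum_congr rfl fun j _ => ?_
        simp only [hD']
        rw [dif_pos (show i < d ∧ (j:ℕ) < d from ⟨h, j.isLt⟩)]
      rw [this, hDDrow]
    · have : ∑ j ∈ Finset.range d, D' i j = 0 := by
        refine Finset.sum_eq_zero fun j hj => ?_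
        simp only [hD']
        rw [dif_neg]
        exact fun hc => h hc.1
      rw [this]; norm_num
  have hD'col : ∀ j, ∑ i ∈ Finset.range d, D' i j ≤ 1 := by
    intro j
    by_cases h : j < d
    · have : ∑ i ∈ Finset.range d, D' i j = ∑ i : Fin d, DD i ⟨j, h⟩ := by
        rw [← Fin.sum_univ_eq_sum_range (fun n => D' n j) d]
        refine Finset.sum_congr rfl fun i _ => ?_
        simp only [hD']
        rw [dif_pos (show (i:ℕ) < d ∧ j < d from ⟨i.isLt, h⟩)]
      rw [this, hDDcol]
    · have : ∑ i ∈ Finset.range d, D' i j = 0 := by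
        refine Finset.sum_eq_zero fun i hi => ?_
        simp only [hD']
        rw [dif_neg]
        exact fun hc => h hc.2
      rw [this]; norm_num
  have hconv1 : ∑ i, ∑ j, lam i * mu j * DD i j
      = ∑ i ∈ Finset.range d, ∑ j ∈ Finset.range d, L i * M j * D' i j := by
    rw [← Fin.sum_univ_eq_sum_range (fun n => ∑ j ∈ Finset.range d, L n * M j * D' n j) d]
    refine Finset.sum_congr rfl fun i _ => ?_
    rw [← Fin.sum_univ_eq_sum_range (fun n => L i * M n * D' i n) d]
    refine Finset.sum_congr rfl fun j _ => ?_
    simp only [hL, hM, hD']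
    rw [dif_pos i.isLt, dif_pos j.isLt,
      dif_pos (show (i:ℕ) < d ∧ (j:ℕ) < d from ⟨i.isLt, j.isLt⟩)]
  have hconv2 : ∑ i ∈ Finset.range d, L i * M i = ∑ i, lam i * mu i := by
    rw [← Fin.sum_univ_eq_sum_range (fun n => L n * M n) d]
    refine Finset.sum_congr rfl fun i _ => ?_
    simp only [hL, hM]
    rw [dif_pos i.isLt, dif_pos i.isLt]
  have hmain : (inn psi psit).re ≤ ∑ i, lam i * mu i := by
    calc (inn psi psit).re ≤ ∑ i, ∑ j, lam i * mu j * DD i j := habs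
      _ = ∑ i ∈ Finset.range d, ∑ j ∈ Finset.range d, L i * M j * D' i j := hconv1
      _ ≤ ∑ i ∈ Finset.range d, L i * M i :=
          st15_stoch d L M D' hLa hMa hLd hMd hD'0 hD'row hD'col
      _ = ∑ i, lam i * mu i := hconv2
  -- distance computation
  have hdd : (inn (fun p => psi p - psit p) (fun p => psi p - psit p)).re
      = 2 - 2 * (inn psi psit).re := by
    have e : inn (fun p => psi p - psit p) (fun p => psi p - psit p)
        = inn psi psi - inn psi psit - inn psit psi + inn psit psit := by
      simp only [inn]
      rw [← Finset.sum_sub_distrib, ← Finset.sum_sub_distrib, ← Finset.sum_add_distrib]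
      refine Finset.sum_congr rfl fun p _ => ?_
      simp only [star_sub]
      ring
    rw [e, hpsi, hpsit]
    have hstar : inn psit psi = star (inn psi psit) := (st15_inn_star psi psit).symm
    rw [hstar]
    simp only [Complex.sub_re, Complex.add_re, Complex.one_re, Complex.star_def,
      Complex.conj_re]
    ring
  have hsum : ∑ i, (lam i - mu i) ^ 2 = 2 - 2 * ∑ i, lam i * mu i := by
    have e : ∑ i, (lam i - mu i) ^ 2
        = (∑ i, lam i ^ 2) + (∑ i, mu i ^ 2) - 2 * ∑ i, lam i * mu i := by
      rw [Finset.mul_sum, ← Finset.sum_add_distrib, ← Finset.sum_sub_distrib]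
      refine Finset.sum_congr rfl fun i _ => by ring
    rw [e, hltwo, hmtwo]; ring
  show Real.sqrt _ ≤ Real.sqrt _
  apply Real.sqrt_le_sqrt
  rw [hdd, hsum]
  linarith [hmain]

end
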